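/- Let d > 6 be an integer. For every ε > 0 there exists K ≥ 1 such that for every v ∈ ℤ^d with |v| ≥ K and every x ∈ ℤ^d with x ≠ 0, one has ∑_{y, u, w ∈ ℤ^d} |u|^{2−d} |w − u|^{2−d} |y − w|^{2−d} |y + v − u|^{2−d} |u − x|^{2−d} ≤ ε |x|^{4−d}, where terms in which any of u, w − u, y − w, y + v − u, u − x vanishes are omitted from the sum. -/

import Mathlib

open scoped ENNReal

/-- The power `|x|^a` (ℓ^∞ norm of a lattice point, real exponent), valued in `[0,∞]`,
with the convention that the term is omitted (set to `0`) when the base vanishes. -/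
noncomputable def latPow {d : ℕ} (x : Fin d → ℤ) (a : ℝ) : ℝ≥0∞ :=
  if x = 0 then 0 else ENNReal.ofReal (‖x‖ ^ a)

namespace Stmt6Aux
open scoped Classical

variable {d : ℕ}

def nu (x : Fin d → ℤ) : ℕ := Finset.univ.sup fun i => (x i).natAbs
lemma norm_int_eq (k : ℤ) : ‖k‖ = (k.natAbs : ℝ) := by
  rw [Int.norm_eq_abs, Nat.cast_natAbs, Int.cast_abs]
lemma norm_eq_nu (x : Fin d → ℤ) : ‖x‖ = (nu x : ℝ) := by
  refine le_antisymm ?_ ?_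
  · rw [pi_norm_le_iff_of_nonneg (by positivity)]
    intro i
    rw [norm_int_eq]
    exact_mod_cast Nat.cast_le.2 (Finset.le_sup (f := fun i => (x i).natAbs) (Finset.mem_univ i))
  · by_cases h : nu x = 0
    · simp [h, norm_nonneg]
    · have hne : (Finset.univ : Finset (Fin d)).Nonempty := by
        by_contra he
        rw [Finset.not_nonempty_iff_eq_empty] at he
        exact h (by simp [nu, he])
      obtain ⟨i, _, hi⟩ := Finset.exists_mem_eq_sup Finset.univ hne fun i => (x i).natAbs
      rw [show (nu x : ℝ) = ‖x i‖ by rw [norm_int_eq, nu, hi]]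
      exact norm_le_pi_norm x i
lemma nu_eq_zero_iff (x : Fin d → ℤ) : nu x = 0 ↔ x = 0 := by
  simp [nu, Finset.sup_eq_bot_iff, funext_iff, Int.natAbs_eq_zero]
lemma one_le_norm {x : Fin d → ℤ} (hx : x ≠ 0) : 1 ≤ ‖x‖ := by
  rw [norm_eq_nu]
  have : nu x ≠ 0 := fun h => hx ((nu_eq_zero_iff x).1 h)
  exact_mod_cast Nat.one_le_iff_ne_zero.2 this

lemma nu_le_iff {x : Fin d → ℤ} {n : ℕ} : nu x ≤ n ↔ ∀ i, (x i).natAbs ≤ n := by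
  simp [nu]
noncomputable def Box (d n : ℕ) : Finset (Fin d → ℤ) := Fintype.piFinset fun _ => Finset.Icc (-(n:ℤ)) n
lemma mem_Box {n : ℕ} {x : Fin d → ℤ} : x ∈ Box d n ↔ nu x ≤ n := by
  simp [Box, Fintype.mem_piFinset, nu_le_iff, abs_le, Int.natAbs_le_iff_sq_le]
  constructor
  · intro h i; rcases h i with ⟨h1, h2⟩; omega
  · intro h i; have := h i; omega
lemma card_Box (n : ℕ) : (Box d n).card = (2*n+1)^d := by
  rw [Box, Fintype.card_piFinset]
  simp [Int.card_Icc]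
  congr 1
  omega
noncomputable def Shell (d n : ℕ) : Finset (Fin d → ℤ) := (Box d n).filter (fun w => nu w = n)
lemma mem_Shell {n : ℕ} {w : Fin d → ℤ} : w ∈ Shell d n ↔ nu w = n := by
  simp only [Shell, Finset.mem_filter, mem_Box]
  exact ⟨fun h => h.2, fun h => ⟨le_of_eq h, h⟩⟩
lemma tsum_nu (f : ℕ → ℝ≥0∞) :
    ∑' w : Fin d → ℤ, f (nu w) = ∑' n : ℕ, ((Shell d n).card : ℝ≥0∞) * f n := by
  have h1 : ∀ w : Fin d → ℤ, f (nu w) = ∑' n : ℕ, (if nu w = n then f n else 0) := by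
    intro w
    rw [tsum_eq_single (nu w) (fun n hn => if_neg (fun h => hn h.symm))]
    simp
  simp_rw [h1]
  rw [ENNReal.tsum_comm]
  congr 1; funext n
  rw [tsum_eq_sum (s := Shell d n) (fun w hw => if_neg (fun h => hw (mem_Shell.2 h)))]
  rw [Finset.sum_congr rfl (fun w hw => if_pos (mem_Shell.1 hw)), Finset.sum_const, nsmul_eq_mul]

lemma real_pow_sub_pow (a b : ℝ) (h0 : 0 ≤ b) (hba : b ≤ a) (d : ℕ) :
    a^d - b^d ≤ d * (a-b) * a^(d-1) := by
  rw [← geom_sum₂_mul]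
  have ha : 0 ≤ a := le_trans h0 hba
  have hbd : ∀ i ∈ Finset.range d, a^i * b^(d-1-i) ≤ a^(d-1) := by
    intro i hi
    rw [Finset.mem_range] at hi
    calc a^i * b^(d-1-i) ≤ a^i * a^(d-1-i) := by
          apply mul_le_mul_of_nonneg_left (pow_le_pow_left₀ h0 hba _) (pow_nonneg ha i)
      _ = a^(i + (d-1-i)) := (pow_add a i (d-1-i)).symm
      _ = a^(d-1) := by congr 1; omega
  calc (∑ i ∈ Finset.range d, a^i * b^(d-1-i)) * (a - b)
      ≤ (d * a^(d-1)) * (a-b) := by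
        apply mul_le_mul_of_nonneg_right _ (by linarith)
        calc (∑ i ∈ Finset.range d, a^i * b^(d-1-i)) ≤ ∑ _i ∈ Finset.range d, a^(d-1) :=
              Finset.sum_le_sum hbd
          _ = d * a^(d-1) := by simp [Finset.sum_const, nsmul_eq_mul]
    _ = d * (a-b) * a^(d-1) := by ring
lemma card_Shell_le (hd : 1 ≤ d) {n : ℕ} (hn : 1 ≤ n) :
    ((Shell d n).card : ℝ) ≤ 2*d*3^d * (n:ℝ)^((d:ℝ)-1) := by
  obtain ⟨m, rfl⟩ : ∃ m, n = m + 1 := ⟨n - 1, by omega⟩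
  have hsub : Shell d (m+1) ⊆ Box d (m+1) \ Box d m := by
    intro w hw
    rw [Finset.mem_sdiff, mem_Box, mem_Box]
    have := mem_Shell.1 hw
    omega
  have hcard : (Shell d (m+1)).card ≤ (2*(m+1)+1)^d - (2*m+1)^d := by
    calc (Shell d (m+1)).card ≤ (Box d (m+1) \ Box d m).card := Finset.card_le_card hsub
      _ = (Box d (m+1)).card - (Box d m).card := by
          rw [Finset.card_sdiff_of_subset (fun w hw => by rw [mem_Box] at *; omega)]
      _ = (2*(m+1)+1)^d - (2*m+1)^d := by rw [card_Box, card_Box]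
  set n := m + 1
  have hcast : ((Shell d n).card : ℝ) ≤ ((2*n+1):ℝ)^d - ((2*m+1):ℝ)^d := by
    have h2 : ((2*m+1):ℕ)^d ≤ ((2*n+1):ℕ)^d := Nat.pow_le_pow_left (by omega) d
    calc ((Shell d n).card : ℝ) ≤ (((2*n+1)^d - (2*m+1)^d : ℕ) : ℝ) := by exact_mod_cast hcard
      _ = ((2*n+1):ℝ)^d - ((2*m+1):ℝ)^d := by rw [Nat.cast_sub h2]; push_cast; ring_nf
  have hkey : ((2*n+1):ℝ)^d - ((2*m+1):ℝ)^d ≤ d * 2 * ((2*n+1):ℝ)^(d-1) := by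
    have := real_pow_sub_pow ((2*n+1):ℝ) ((2*m+1):ℝ) (by positivity)
      (by simp only [n]; push_cast; linarith) d
    have he : ((2*n+1):ℝ) - ((2*m+1):ℝ) = 2 := by simp only [n]; push_cast; ring
    rw [he] at this
    linarith
  have hfin : ((2*n+1):ℝ)^(d-1) ≤ 3^d * (n:ℝ)^((d:ℝ)-1) := by
    have h3 : ((2*n+1):ℝ) ≤ 3 * n := by
      have : (1:ℝ) ≤ (n:ℝ) := by exact_mod_cast hn
      push_cast; linarith
    have hr : (n:ℝ)^((d:ℝ)-1) = (n:ℝ)^(d-1 : ℕ) := by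
      rw [show ((d:ℝ)-1) = ((d-1 : ℕ) : ℝ) by push_cast [Nat.cast_sub hd]; ring, Real.rpow_natCast]
    rw [hr]
    calc ((2*n+1):ℝ)^(d-1) ≤ (3*n:ℝ)^(d-1) := pow_le_pow_left₀ (by positivity) h3 _
      _ = 3^(d-1) * (n:ℝ)^(d-1) := by rw [mul_pow]
      _ ≤ 3^d * (n:ℝ)^(d-1) := by
          apply mul_le_mul_of_nonneg_right (pow_le_pow_right₀ (by norm_num) (by omega)) (by positivity)
  calc ((Shell d n).card : ℝ) ≤ ((2*n+1):ℝ)^d - ((2*m+1):ℝ)^d := hcast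
    _ ≤ d * 2 * ((2*n+1):ℝ)^(d-1) := hkey
    _ ≤ d * 2 * (3^d * (n:ℝ)^((d:ℝ)-1)) := by
        apply mul_le_mul_of_nonneg_left hfin (by positivity)
    _ = 2*d*3^d * (n:ℝ)^((d:ℝ)-1) := by ring

lemma tele_bound (r : ℝ) (hr : 1 ≤ r) (n : ℕ) (hn : 1 ≤ n) :
    (n:ℝ)^(-(r+1)) ≤ 2^(r+1) * ((n:ℝ)^(-r) - ((n:ℝ)+1)^(-r)) := by
  set x : ℝ := (n:ℝ) with hxdef
  have hx : 1 ≤ x := by rw [hxdef]; exact_mod_cast hn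
  have hx0 : 0 < x := by linarith
  have hx1 : 0 < x + 1 := by linarith
  have hber : 1 + r * (1/x) ≤ (1 + 1/x)^r :=
    one_add_mul_self_le_rpow_one_add (by have := one_div_nonneg.2 (le_of_lt hx0); linarith) hr
  have hid : (x+1)^(-r) * ((1 + 1/x)^r - 1) = x^(-r) - (x+1)^(-r) := by
    have h1 : (1 + 1/x) = (x+1)/x := by field_simp
    have h2 : ((x+1)/x)^r = (x+1)^r / x^r := Real.div_rpow (by linarith : (0:ℝ) ≤ x+1) (le_of_lt hx0) r
    have h3 : (x+1)^(-r) * (x+1)^r = 1 := by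
      rw [← Real.rpow_add hx1]; simp
    rw [h1, h2, mul_sub, ← mul_div_assoc, h3, mul_one]
    rw [Real.rpow_neg (le_of_lt hx0)]
    field_simp
  have hstep1 : (x+1)^(-r) * (r * (1/x)) ≤ x^(-r) - (x+1)^(-r) := by
    rw [← hid]
    apply mul_le_mul_of_nonneg_left (by linarith) (Real.rpow_nonneg (by linarith) _)
  have hstep2 : (x+1)^(-(r+1)) ≤ (x+1)^(-r) * (r * (1/x)) := by
    have h4 : (x+1)^(-(r+1)) = (x+1)^(-r) * (x+1)^(-1 : ℝ) := by
      rw [← Real.rpow_add hx1]; ring_nf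
    rw [h4]
    apply mul_le_mul_of_nonneg_left _ (Real.rpow_nonneg (by linarith) _)
    rw [Real.rpow_neg_one]
    calc (x+1)⁻¹ ≤ 1/x := by
          rw [one_div]
          exact inv_anti₀ hx0 (by linarith)
      _ ≤ r * (1/x) := by
          nth_rewrite 1 [← one_mul (1/x)]
          apply mul_le_mul_of_nonneg_right hr (by positivity)
  have hstep3 : x^(-(r+1)) ≤ 2^(r+1) * (x+1)^(-(r+1)) := by
    have h5 : x + 1 ≤ 2*x := by linarith
    have h6 : (2*x)^(-(r+1)) ≤ (x+1)^(-(r+1)) :=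
      Real.rpow_le_rpow_of_nonpos hx1 h5 (by linarith)
    have h7 : (2*x)^(-(r+1)) = 2^(-(r+1)) * x^(-(r+1)) :=
      Real.mul_rpow (by norm_num) (le_of_lt hx0)
    have h8 : (0:ℝ) < 2^(r+1) := Real.rpow_pos_of_pos (by norm_num) _
    calc x^(-(r+1)) = 2^(r+1) * (2^(-(r+1)) * x^(-(r+1))) := by
          rw [← mul_assoc, ← Real.rpow_add (by norm_num : (0:ℝ) < 2)]
          rw [show r + 1 + -(r + 1) = 0 by ring, Real.rpow_zero, one_mul]
      _ ≤ 2^(r+1) * (x+1)^(-(r+1)) := by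
          rw [← h7]
          exact mul_le_mul_of_nonneg_left h6 (le_of_lt h8)
  calc x^(-(r+1)) ≤ 2^(r+1) * (x+1)^(-(r+1)) := hstep3
    _ ≤ 2^(r+1) * ((x+1)^(-r) * (r * (1/x))) := by
        apply mul_le_mul_of_nonneg_left hstep2 (le_of_lt (Real.rpow_pos_of_pos (by norm_num) _))
    _ ≤ 2^(r+1) * (x^(-r) - (x+1)^(-r)) := by
        apply mul_le_mul_of_nonneg_left hstep1 (le_of_lt (Real.rpow_pos_of_pos (by norm_num) _))

lemma nat_ball_sum (p R : ℝ) (hp : 0 ≤ p) (hR : 1 ≤ R) :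
    ∑' n : ℕ, (if 1 ≤ n ∧ (n:ℝ) ≤ R then ENNReal.ofReal ((n:ℝ)^p) else 0)
      ≤ ENNReal.ofReal (R^(p+1)) := by
  have hR0 : (0:ℝ) ≤ R := by linarith
  rw [tsum_eq_sum (s := Finset.Icc 1 ⌊R⌋₊) ?h0]
  case h0 =>
    intro n hn
    rw [Finset.mem_Icc] at hn
    push_neg at hn
    apply if_neg
    rintro ⟨h1, h2⟩
    exact absurd ((Nat.le_floor_iff hR0).2 h2) (by intro h; exact absurd (hn h1) (by omega))
  calc ∑ n ∈ Finset.Icc 1 ⌊R⌋₊, (if 1 ≤ n ∧ (n:ℝ) ≤ R then ENNReal.ofReal ((n:ℝ)^p) else 0)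
      ≤ ∑ _n ∈ Finset.Icc 1 ⌊R⌋₊, ENNReal.ofReal (R^p) := by
        apply Finset.sum_le_sum
        intro n hn
        split_ifs with h
        · exact ENNReal.ofReal_le_ofReal (Real.rpow_le_rpow (by positivity) h.2 hp)
        · positivity
    _ = (⌊R⌋₊ : ℝ≥0∞) * ENNReal.ofReal (R^p) := by
        rw [Finset.sum_const, Nat.card_Icc, nsmul_eq_mul]
        norm_num
    _ ≤ ENNReal.ofReal R * ENNReal.ofReal (R^p) := by
        apply mul_le_mul_left _ _
        rw [← ENNReal.ofReal_natCast]
        exact ENNReal.ofReal_le_ofReal (Nat.floor_le hR0)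
    _ = ENNReal.ofReal (R^(p+1)) := by
        rw [← ENNReal.ofReal_mul hR0, Real.rpow_add_one (by linarith) p]
        ring_nf
lemma nat_tail_sum (q : ℝ) (hq : 2 ≤ q) (N : ℕ) (hN : 1 ≤ N) :
    ∑' n : ℕ, (if N ≤ n then ENNReal.ofReal ((n:ℝ)^(-q)) else 0)
      ≤ ENNReal.ofReal (2^q * (N:ℝ)^(1-q)) := by
  set r := q - 1 with hrdef
  have hr : 1 ≤ r := by simp [hrdef]; linarith
  have hqr : q = r + 1 := by simp [hrdef]
  set g : ℕ → ℝ := fun n => (n:ℝ)^(-r) with hg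
  have hreal : ∀ M : ℕ, ∑ n ∈ Finset.Icc N M, (n:ℝ)^(-q) ≤ 2^q * (N:ℝ)^(1-q) := by
    intro M
    rcases le_or_gt N M with hNM | hNM
    · have htel : ∑ n ∈ Finset.Icc N M, (g n - g (n+1)) = g N - g (M+1) := by
        rw [← Finset.Ico_add_one_right_eq_Icc, Finset.sum_Ico_eq_sum_range]
        have := Finset.sum_range_sub' (fun i => g (N+i)) (M+1-N)
        simp only [Nat.add_zero] at this
        calc ∑ i ∈ Finset.range (M+1-N), (g (N+i) - g (N+i+1))
            = ∑ i ∈ Finset.range (M+1-N), (g (N+i) - g (N+(i+1))) := by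
              apply Finset.sum_congr rfl; intro i _; congr 2
          _ = g N - g (N + (M+1-N)) := this
          _ = g N - g (M+1) := by congr 2; omega
      calc ∑ n ∈ Finset.Icc N M, (n:ℝ)^(-q)
          ≤ ∑ n ∈ Finset.Icc N M, 2^q * (g n - g (n+1)) := by
            apply Finset.sum_le_sum
            intro n hn
            rw [Finset.mem_Icc] at hn
            have h1n : 1 ≤ n := le_trans hN hn.1
            have := tele_bound r hr n h1n
            rw [← hqr] at this
            simpa [hg, hqr] using this
        _ = 2^q * (g N - g (M+1)) := by rw [← Finset.mul_sum, htel]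
        _ ≤ 2^q * g N := by
            apply mul_le_mul_of_nonneg_left _ (le_of_lt (Real.rpow_pos_of_pos two_pos q))
            have : 0 ≤ g (M+1) := Real.rpow_nonneg (by positivity) _
            linarith
        _ = 2^q * (N:ℝ)^(1-q) := by rw [hg]; congr 1; rw [show (1-q) = -r by rw [hrdef]; ring]
    · rw [Finset.Icc_eq_empty (by omega)]
      simp
      positivity
  rw [ENNReal.tsum_eq_iSup_sum]
  apply iSup_le
  intro s
  set M := s.sup id with hM
  calc ∑ n ∈ s, (if N ≤ n then ENNReal.ofReal ((n:ℝ)^(-q)) else 0)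
      = ∑ n ∈ s.filter (fun n => N ≤ n), ENNReal.ofReal ((n:ℝ)^(-q)) := by
        rw [Finset.sum_filter]
    _ ≤ ∑ n ∈ Finset.Icc N M, ENNReal.ofReal ((n:ℝ)^(-q)) := by
        apply Finset.sum_le_sum_of_subset
        intro n hn
        rw [Finset.mem_filter] at hn
        rw [Finset.mem_Icc]
        exact ⟨hn.2, Finset.le_sup (f := id) hn.1⟩
    _ = ENNReal.ofReal (∑ n ∈ Finset.Icc N M, (n:ℝ)^(-q)) := by
        rw [ENNReal.ofReal_sum_of_nonneg]
        intro n _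
        positivity
    _ ≤ ENNReal.ofReal (2^q * (N:ℝ)^(1-q)) := ENNReal.ofReal_le_ofReal (hreal M)

noncomputable def Acst (d : ℕ) : ℝ := 2*d*3^d
lemma Acst_pos (hd : 1 ≤ d) : 0 < Acst d := by
  have : (1:ℝ) ≤ (d:ℝ) := by exact_mod_cast hd
  unfold Acst; positivity
lemma ball_sum (hd : 1 ≤ d) (s R : ℝ) (hs0 : 0 ≤ s) (hs1 : s ≤ (d:ℝ) - 1) (hR : 1 ≤ R) :
    ∑' z : Fin d → ℤ, (if z ≠ 0 ∧ ‖z‖ ≤ R then ENNReal.ofReal (‖z‖^(-s)) else 0)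
      ≤ ENNReal.ofReal (Acst d * R^((d:ℝ)-s)) := by
  have hA := Acst_pos hd
  have key : ∀ z : Fin d → ℤ, (if z ≠ 0 ∧ ‖z‖ ≤ R then ENNReal.ofReal (‖z‖^(-s)) else 0)
      = (fun n : ℕ => if 1 ≤ n ∧ (n:ℝ) ≤ R then ENNReal.ofReal ((n:ℝ)^(-s)) else 0) (nu z) := by
    intro z
    simp only [norm_eq_nu]
    congr 1
    simp only [eq_iff_iff]
    constructor
    · rintro ⟨h1, h2⟩
      refine ⟨?_, h2⟩
      have := (not_iff_not.2 (nu_eq_zero_iff z)).2 h1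
      omega
    · rintro ⟨h1, h2⟩
      refine ⟨?_, h2⟩
      intro h
      rw [(nu_eq_zero_iff z).2 h] at h1
      omega
  rw [tsum_congr key]
  refine le_trans (le_of_eq (tsum_nu (d := d)
    (fun n : ℕ => if 1 ≤ n ∧ (n:ℝ) ≤ R then ENNReal.ofReal ((n:ℝ)^(-s)) else 0))) ?_
  have term : ∀ n : ℕ, ((Shell d n).card : ℝ≥0∞) *
        (if 1 ≤ n ∧ (n:ℝ) ≤ R then ENNReal.ofReal ((n:ℝ)^(-s)) else 0)
      ≤ ENNReal.ofReal (Acst d) *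
        (if 1 ≤ n ∧ (n:ℝ) ≤ R then ENNReal.ofReal ((n:ℝ)^((d:ℝ)-1-s)) else 0) := by
    intro n
    split_ifs with h
    · have hn1 : (1:ℝ) ≤ (n:ℝ) := by exact_mod_cast h.1
      have hn0 : (0:ℝ) < (n:ℝ) := by linarith
      have hc : ((Shell d n).card : ℝ≥0∞) ≤ ENNReal.ofReal (Acst d * (n:ℝ)^((d:ℝ)-1)) := by
        rw [← ENNReal.ofReal_natCast]
        exact ENNReal.ofReal_le_ofReal (card_Shell_le hd h.1)
      calc ((Shell d n).card : ℝ≥0∞) * ENNReal.ofReal ((n:ℝ)^(-s))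
          ≤ ENNReal.ofReal (Acst d * (n:ℝ)^((d:ℝ)-1)) * ENNReal.ofReal ((n:ℝ)^(-s)) :=
            mul_le_mul_left hc _
        _ = ENNReal.ofReal (Acst d) * ENNReal.ofReal ((n:ℝ)^((d:ℝ)-1-s)) := by
            rw [ENNReal.ofReal_mul (le_of_lt hA), mul_assoc, ← ENNReal.ofReal_mul (by positivity),
              ← Real.rpow_add hn0]
            ring_nf
    · simp
  calc ∑' n : ℕ, ((Shell d n).card : ℝ≥0∞) *
        (if 1 ≤ n ∧ (n:ℝ) ≤ R then ENNReal.ofReal ((n:ℝ)^(-s)) else 0)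
      ≤ ∑' n : ℕ, ENNReal.ofReal (Acst d) *
        (if 1 ≤ n ∧ (n:ℝ) ≤ R then ENNReal.ofReal ((n:ℝ)^((d:ℝ)-1-s)) else 0) :=
        ENNReal.tsum_le_tsum term
    _ = ENNReal.ofReal (Acst d) * ∑' n : ℕ,
        (if 1 ≤ n ∧ (n:ℝ) ≤ R then ENNReal.ofReal ((n:ℝ)^((d:ℝ)-1-s)) else 0) :=
        ENNReal.tsum_mul_left
    _ ≤ ENNReal.ofReal (Acst d) * ENNReal.ofReal (R^(((d:ℝ)-1-s)+1)) := by
        apply mul_le_mul_right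
        exact nat_ball_sum ((d:ℝ)-1-s) R (by linarith) hR
    _ = ENNReal.ofReal (Acst d * R^((d:ℝ)-s)) := by
        rw [← ENNReal.ofReal_mul (le_of_lt hA)]
        congr 2
        ring
lemma tail_sum (hd : 1 ≤ d) (σ R : ℝ) (hσ : (d:ℝ) + 1 ≤ σ) (hR : 1 ≤ R) :
    ∑' z : Fin d → ℤ, (if R ≤ ‖z‖ then ENNReal.ofReal (‖z‖^(-σ)) else 0)
      ≤ ENNReal.ofReal (Acst d * 2^(σ-(d:ℝ)+1) * R^((d:ℝ)-σ)) := by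
  have hA := Acst_pos hd
  have hd1 : (1:ℝ) ≤ (d:ℝ) := by exact_mod_cast hd
  set q : ℝ := σ - (d:ℝ) + 1 with hqdef
  have hq : 2 ≤ q := by rw [hqdef]; linarith
  set N : ℕ := ⌈R⌉₊ with hNdef
  have hN : 1 ≤ N := by
    rw [hNdef]
    exact Nat.one_le_ceil_iff.2 (by linarith)
  have key : ∀ z : Fin d → ℤ, (if R ≤ ‖z‖ then ENNReal.ofReal (‖z‖^(-σ)) else 0)
      = (fun n : ℕ => if R ≤ (n:ℝ) then ENNReal.ofReal ((n:ℝ)^(-σ)) else 0) (nu z) := by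
    intro z
    simp only [norm_eq_nu]
  rw [tsum_congr key]
  refine le_trans (le_of_eq (tsum_nu (d := d)
    (fun n : ℕ => if R ≤ (n:ℝ) then ENNReal.ofReal ((n:ℝ)^(-σ)) else 0))) ?_
  have term : ∀ n : ℕ, ((Shell d n).card : ℝ≥0∞) *
        (if R ≤ (n:ℝ) then ENNReal.ofReal ((n:ℝ)^(-σ)) else 0)
      ≤ ENNReal.ofReal (Acst d) * (if N ≤ n then ENNReal.ofReal ((n:ℝ)^(-q)) else 0) := by
    intro n
    split_ifs with h1 h2
    · have hn1 : (1:ℝ) ≤ (n:ℝ) := by linarith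
      have hn1' : 1 ≤ n := by exact_mod_cast hn1
      have hn0 : (0:ℝ) < (n:ℝ) := by linarith
      have hc : ((Shell d n).card : ℝ≥0∞) ≤ ENNReal.ofReal (Acst d * (n:ℝ)^((d:ℝ)-1)) := by
        rw [← ENNReal.ofReal_natCast]
        exact ENNReal.ofReal_le_ofReal (card_Shell_le hd hn1')
      calc ((Shell d n).card : ℝ≥0∞) * ENNReal.ofReal ((n:ℝ)^(-σ))
          ≤ ENNReal.ofReal (Acst d * (n:ℝ)^((d:ℝ)-1)) * ENNReal.ofReal ((n:ℝ)^(-σ)) :=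
            mul_le_mul_left hc _
        _ = ENNReal.ofReal (Acst d) * ENNReal.ofReal ((n:ℝ)^(-q)) := by
            rw [ENNReal.ofReal_mul (le_of_lt hA), mul_assoc, ← ENNReal.ofReal_mul (by positivity),
              ← Real.rpow_add hn0]
            congr 3
            rw [hqdef]; ring
    · exact absurd (Nat.ceil_le.2 h1) h2
    · simp
    · simp
  calc ∑' n : ℕ, ((Shell d n).card : ℝ≥0∞) *
        (if R ≤ (n:ℝ) then ENNReal.ofReal ((n:ℝ)^(-σ)) else 0)
      ≤ ∑' n : ℕ, ENNReal.ofReal (Acst d) *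
        (if N ≤ n then ENNReal.ofReal ((n:ℝ)^(-q)) else 0) := ENNReal.tsum_le_tsum term
    _ = ENNReal.ofReal (Acst d) * ∑' n : ℕ,
        (if N ≤ n then ENNReal.ofReal ((n:ℝ)^(-q)) else 0) := ENNReal.tsum_mul_left
    _ ≤ ENNReal.ofReal (Acst d) * ENNReal.ofReal (2^q * (N:ℝ)^(1-q)) := by
        apply mul_le_mul_right
        exact nat_tail_sum q hq N hN
    _ ≤ ENNReal.ofReal (Acst d * 2^(σ-(d:ℝ)+1) * R^((d:ℝ)-σ)) := by
        rw [← ENNReal.ofReal_mul (le_of_lt hA)]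
        apply ENNReal.ofReal_le_ofReal
        rw [mul_assoc]
        apply mul_le_mul_of_nonneg_left _ (le_of_lt hA)
        apply mul_le_mul_of_nonneg_left _ (by positivity)
        have hRN : R ≤ (N:ℝ) := Nat.le_ceil R
        have h1q : 1 - q = (d:ℝ) - σ := by rw [hqdef]; ring
        rw [h1q] at *
        exact Real.rpow_le_rpow_of_nonpos (by linarith) hRN (by linarith)

noncomputable def J (z : Fin d → ℤ) (s : ℝ) : ℝ≥0∞ :=
  if z = 0 then 0 else ENNReal.ofReal (‖z‖^(-s))
noncomputable def P (z : Fin d → ℤ) (r : ℝ) : ℝ≥0∞ :=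
  if z = 0 then 1 else ENNReal.ofReal (‖z‖^(-r))
noncomputable def Ccst (d : ℕ) (s t : ℝ) : ℝ :=
  Acst d * 2^t + Acst d * 2^s + 2 * (Acst d * 2^(s+t-(d:ℝ)+1))
lemma Ccst_pos (hd : 1 ≤ d) (s t : ℝ) : 0 < Ccst d s t := by
  have := Acst_pos hd
  have h1 : (0:ℝ) < 2^t := Real.rpow_pos_of_pos two_pos t
  have h2 : (0:ℝ) < 2^s := Real.rpow_pos_of_pos two_pos s
  have h3 : (0:ℝ) < 2^(s+t-(d:ℝ)+1) := Real.rpow_pos_of_pos two_pos _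
  unfold Ccst; positivity
lemma tsum_translate (a : Fin d → ℤ) (F : (Fin d → ℤ) → ℝ≥0∞) :
    ∑' w : Fin d → ℤ, F (w - a) = ∑' z : Fin d → ℤ, F z :=
  (Equiv.subRight a).tsum_eq F
lemma conv_sum (hd : 1 ≤ d) (s t : ℝ) (hs0 : 0 < s) (hs1 : s ≤ (d:ℝ)-1)
    (ht0 : 0 < t) (ht1 : t ≤ (d:ℝ)-1) (hst : (d:ℝ)+1 ≤ s+t) (a b : Fin d → ℤ) :
    ∑' w : Fin d → ℤ, J (w-a) s * J (w-b) t
      ≤ ENNReal.ofReal (Ccst d s t) * P (a-b) (s+t-(d:ℝ)) := by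
  have hA := Acst_pos hd
  have h2t : (0:ℝ) < 2^t := Real.rpow_pos_of_pos two_pos t
  have h2s : (0:ℝ) < 2^s := Real.rpow_pos_of_pos two_pos s
  have h2q : (0:ℝ) < 2^(s+t-(d:ℝ)+1) := Real.rpow_pos_of_pos two_pos _
  by_cases hab : a = b
  · -- diagonal case
    subst hab
    have hpt : ∀ w : Fin d → ℤ, J (w-a) s * J (w-a) t
        ≤ (fun z => if (1:ℝ) ≤ ‖z‖ then ENNReal.ofReal (‖z‖^(-(s+t))) else 0) (w - a) := by
      intro w
      by_cases h : w - a = 0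
      · simp [J, h]
      · have h1 : (1:ℝ) ≤ ‖w-a‖ := one_le_norm h
        have h0 : (0:ℝ) < ‖w-a‖ := by linarith
        simp only [J, if_neg h, if_pos h1]
        rw [← ENNReal.ofReal_mul (by positivity), ← Real.rpow_add h0]
        apply ENNReal.ofReal_le_ofReal
        apply le_of_eq
        congr 1
        ring
    calc ∑' w : Fin d → ℤ, J (w-a) s * J (w-a) t
        ≤ ∑' w : Fin d → ℤ,
          (fun z => if (1:ℝ) ≤ ‖z‖ then ENNReal.ofReal (‖z‖^(-(s+t))) else 0) (w-a) :=
          ENNReal.tsum_le_tsum hpt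
      _ = ∑' z : Fin d → ℤ, (if (1:ℝ) ≤ ‖z‖ then ENNReal.ofReal (‖z‖^(-(s+t))) else 0) :=
          tsum_translate a (fun z => if (1:ℝ) ≤ ‖z‖ then ENNReal.ofReal (‖z‖^(-(s+t))) else 0)
      _ ≤ ENNReal.ofReal (Acst d * 2^(s+t-(d:ℝ)+1) * 1^((d:ℝ)-(s+t))) :=
          tail_sum hd (s+t) 1 hst le_rfl
      _ ≤ ENNReal.ofReal (Ccst d s t) * P (a-a) (s+t-(d:ℝ)) := by
          have hP : P (a-a) (s+t-(d:ℝ)) = 1 := by simp [P]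
          rw [hP, mul_one]
          apply ENNReal.ofReal_le_ofReal
          rw [Real.one_rpow, mul_one]
          unfold Ccst
          nlinarith
  · -- off-diagonal
    set M : ℝ := ‖a - b‖ with hMdef
    have hab' : a - b ≠ 0 := fun h => hab (by rwa [sub_eq_zero] at h)
    have hM : 1 ≤ M := one_le_norm hab'
    have hM0 : (0:ℝ) < M := by linarith
    have hM2 : (0:ℝ) < M/2 := by linarith
    set g1 : (Fin d → ℤ) → ℝ≥0∞ := fun z =>
      ENNReal.ofReal ((M/2)^(-t)) * (if z ≠ 0 ∧ ‖z‖ ≤ M then ENNReal.ofReal (‖z‖^(-s)) else 0)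
    set g2 : (Fin d → ℤ) → ℝ≥0∞ := fun z =>
      ENNReal.ofReal ((M/2)^(-s)) * (if z ≠ 0 ∧ ‖z‖ ≤ M then ENNReal.ofReal (‖z‖^(-t)) else 0)
    set g3 : (Fin d → ℤ) → ℝ≥0∞ := fun z =>
      if M ≤ ‖z‖ then ENNReal.ofReal (‖z‖^(-(s+t))) else 0
    have hpt : ∀ w : Fin d → ℤ, J (w-a) s * J (w-b) t
        ≤ g1 (w-a) + g2 (w-b) + (g3 (w-a) + g3 (w-b)) := by
      intro w
      by_cases ha' : w - a = 0
      · simp [J, ha']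
      by_cases hb' : w - b = 0
      · simp [J, hb']
      have h1a : (1:ℝ) ≤ ‖w-a‖ := one_le_norm ha'
      have h1b : (1:ℝ) ≤ ‖w-b‖ := one_le_norm hb'
      have h0a : (0:ℝ) < ‖w-a‖ := by linarith
      have h0b : (0:ℝ) < ‖w-b‖ := by linarith
      have htri : M ≤ ‖w-a‖ + ‖w-b‖ := by
        have : a - b = -(w-a) + (w - b) := by abel
        rw [hMdef, this]
        calc ‖-(w-a) + (w-b)‖ ≤ ‖-(w-a)‖ + ‖w-b‖ := norm_add_le _ _
          _ = ‖w-a‖ + ‖w-b‖ := by rw [norm_neg]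
      simp only [J, if_neg ha', if_neg hb']
      rcases le_total ‖w-a‖ ‖w-b‖ with hcmp | hcmp
      · have hwb : M/2 ≤ ‖w-b‖ := by linarith
        rcases le_or_gt ‖w-a‖ M with hin | hout
        · -- g1 bound
          have hle : ENNReal.ofReal (‖w-a‖^(-s)) * ENNReal.ofReal (‖w-b‖^(-t)) ≤ g1 (w-a) := by
            simp only [g1, if_pos (And.intro ha' hin)]
            rw [mul_comm]
            apply mul_le_mul_left
            exact ENNReal.ofReal_le_ofReal (Real.rpow_le_rpow_of_nonpos hM2 hwb (by linarith))
          calc ENNReal.ofReal (‖w-a‖^(-s)) * ENNReal.ofReal (‖w-b‖^(-t))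
              ≤ g1 (w-a) := hle
            _ ≤ g1 (w-a) + g2 (w-b) := self_le_add_right _ _
            _ ≤ g1 (w-a) + g2 (w-b) + (g3 (w-a) + g3 (w-b)) := self_le_add_right _ _
        · -- g3 (w-a) bound
          have hle : ENNReal.ofReal (‖w-a‖^(-s)) * ENNReal.ofReal (‖w-b‖^(-t)) ≤ g3 (w-a) := by
            simp only [g3, if_pos (le_of_lt hout)]
            calc ENNReal.ofReal (‖w-a‖^(-s)) * ENNReal.ofReal (‖w-b‖^(-t))
                ≤ ENNReal.ofReal (‖w-a‖^(-s)) * ENNReal.ofReal (‖w-a‖^(-t)) := by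
                  apply mul_le_mul_right
                  exact ENNReal.ofReal_le_ofReal
                    (Real.rpow_le_rpow_of_nonpos h0a hcmp (by linarith))
              _ = ENNReal.ofReal (‖w-a‖^(-(s+t))) := by
                  rw [← ENNReal.ofReal_mul (by positivity), ← Real.rpow_add h0a]
                  congr 2; ring
          calc ENNReal.ofReal (‖w-a‖^(-s)) * ENNReal.ofReal (‖w-b‖^(-t))
              ≤ g3 (w-a) := hle
            _ ≤ g3 (w-a) + g3 (w-b) := self_le_add_right _ _
            _ ≤ g1 (w-a) + g2 (w-b) + (g3 (w-a) + g3 (w-b)) := le_add_self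
      · have hwa : M/2 ≤ ‖w-a‖ := by linarith
        rcases le_or_gt ‖w-b‖ M with hin | hout
        · have hle : ENNReal.ofReal (‖w-a‖^(-s)) * ENNReal.ofReal (‖w-b‖^(-t)) ≤ g2 (w-b) := by
            simp only [g2, if_pos (And.intro hb' hin)]
            apply mul_le_mul_left
            exact ENNReal.ofReal_le_ofReal (Real.rpow_le_rpow_of_nonpos hM2 hwa (by linarith))
          calc ENNReal.ofReal (‖w-a‖^(-s)) * ENNReal.ofReal (‖w-b‖^(-t))
              ≤ g2 (w-b) := hle
            _ ≤ g1 (w-a) + g2 (w-b) := le_add_self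
            _ ≤ g1 (w-a) + g2 (w-b) + (g3 (w-a) + g3 (w-b)) := self_le_add_right _ _
        · have hle : ENNReal.ofReal (‖w-a‖^(-s)) * ENNReal.ofReal (‖w-b‖^(-t)) ≤ g3 (w-b) := by
            simp only [g3, if_pos (le_of_lt hout)]
            calc ENNReal.ofReal (‖w-a‖^(-s)) * ENNReal.ofReal (‖w-b‖^(-t))
                ≤ ENNReal.ofReal (‖w-b‖^(-s)) * ENNReal.ofReal (‖w-b‖^(-t)) := by
                  apply mul_le_mul_left
                  exact ENNReal.ofReal_le_ofReal
                    (Real.rpow_le_rpow_of_nonpos h0b hcmp (by linarith))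
              _ = ENNReal.ofReal (‖w-b‖^(-(s+t))) := by
                  rw [← ENNReal.ofReal_mul (by positivity), ← Real.rpow_add h0b]
                  congr 2; ring
          calc ENNReal.ofReal (‖w-a‖^(-s)) * ENNReal.ofReal (‖w-b‖^(-t))
              ≤ g3 (w-b) := hle
            _ ≤ g3 (w-a) + g3 (w-b) := le_add_self
            _ ≤ g1 (w-a) + g2 (w-b) + (g3 (w-a) + g3 (w-b)) := le_add_self
    -- assemble the four sums
    have hg1 : ∑' w : Fin d → ℤ, g1 (w-a) ≤ ENNReal.ofReal (Acst d * 2^t * M^((d:ℝ)-s-t)) := by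
      rw [tsum_translate a g1]
      calc ∑' z : Fin d → ℤ, g1 z
          = ENNReal.ofReal ((M/2)^(-t)) * ∑' z : Fin d → ℤ,
            (if z ≠ 0 ∧ ‖z‖ ≤ M then ENNReal.ofReal (‖z‖^(-s)) else 0) := ENNReal.tsum_mul_left
        _ ≤ ENNReal.ofReal ((M/2)^(-t)) * ENNReal.ofReal (Acst d * M^((d:ℝ)-s)) :=
            mul_le_mul_right (ball_sum hd s M (le_of_lt hs0) hs1 hM) _
        _ = ENNReal.ofReal (Acst d * 2^t * M^((d:ℝ)-s-t)) := by
            rw [← ENNReal.ofReal_mul (by positivity)]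
            congr 1
            have e1 : (M/2)^(-t) = M^(-t) / 2^(-t) := Real.div_rpow (le_of_lt hM0) (by norm_num) _
            have e2 : (2:ℝ)^(-t) = ((2:ℝ)^t)⁻¹ := Real.rpow_neg (by norm_num) t
            have e3 : M^((d:ℝ)-s) * M^(-t) = M^((d:ℝ)-s-t) := by
              rw [← Real.rpow_add hM0]; ring_nf
            calc (M/2)^(-t) * (Acst d * M^((d:ℝ)-s))
                = (M^(-t) * 2^t) * (Acst d * M^((d:ℝ)-s)) := by
                  rw [e1, e2, div_inv_eq_mul]
              _ = Acst d * 2^t * (M^((d:ℝ)-s) * M^(-t)) := by ring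
              _ = Acst d * 2^t * M^((d:ℝ)-s-t) := by rw [e3]
    have hg2 : ∑' w : Fin d → ℤ, g2 (w-b) ≤ ENNReal.ofReal (Acst d * 2^s * M^((d:ℝ)-s-t)) := by
      rw [tsum_translate b g2]
      calc ∑' z : Fin d → ℤ, g2 z
          = ENNReal.ofReal ((M/2)^(-s)) * ∑' z : Fin d → ℤ,
            (if z ≠ 0 ∧ ‖z‖ ≤ M then ENNReal.ofReal (‖z‖^(-t)) else 0) := ENNReal.tsum_mul_left
        _ ≤ ENNReal.ofReal ((M/2)^(-s)) * ENNReal.ofReal (Acst d * M^((d:ℝ)-t)) :=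
            mul_le_mul_right (ball_sum hd t M (le_of_lt ht0) ht1 hM) _
        _ = ENNReal.ofReal (Acst d * 2^s * M^((d:ℝ)-s-t)) := by
            rw [← ENNReal.ofReal_mul (by positivity)]
            congr 1
            have e1 : (M/2)^(-s) = M^(-s) / 2^(-s) := Real.div_rpow (le_of_lt hM0) (by norm_num) _
            have e2 : (2:ℝ)^(-s) = ((2:ℝ)^s)⁻¹ := Real.rpow_neg (by norm_num) s
            have e3 : M^((d:ℝ)-t) * M^(-s) = M^((d:ℝ)-s-t) := by
              rw [← Real.rpow_add hM0]; ring_nf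
            calc (M/2)^(-s) * (Acst d * M^((d:ℝ)-t))
                = (M^(-s) * 2^s) * (Acst d * M^((d:ℝ)-t)) := by
                  rw [e1, e2, div_inv_eq_mul]
              _ = Acst d * 2^s * (M^((d:ℝ)-t) * M^(-s)) := by ring
              _ = Acst d * 2^s * M^((d:ℝ)-s-t) := by rw [e3]
    have hg3 : ∀ c : Fin d → ℤ, ∑' w : Fin d → ℤ, g3 (w-c)
        ≤ ENNReal.ofReal (Acst d * 2^(s+t-(d:ℝ)+1) * M^((d:ℝ)-s-t)) := by
      intro c
      rw [tsum_translate c g3]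
      refine le_trans (tail_sum hd (s+t) M hst hM) ?_
      apply ENNReal.ofReal_le_ofReal
      apply le_of_eq
      congr 1
      ring
    have hP : P (a-b) (s+t-(d:ℝ)) = ENNReal.ofReal (M^((d:ℝ)-s-t)) := by
      rw [P, if_neg hab']
      congr 1
      ring_nf
      rw [hMdef]
    calc ∑' w : Fin d → ℤ, J (w-a) s * J (w-b) t
        ≤ ∑' w : Fin d → ℤ, (g1 (w-a) + g2 (w-b) + (g3 (w-a) + g3 (w-b))) :=
          ENNReal.tsum_le_tsum hpt
      _ = ∑' w : Fin d → ℤ, g1 (w-a) + ∑' w : Fin d → ℤ, g2 (w-b)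
          + (∑' w : Fin d → ℤ, g3 (w-a) + ∑' w : Fin d → ℤ, g3 (w-b)) := by
          rw [ENNReal.tsum_add, ENNReal.tsum_add, ENNReal.tsum_add]
      _ ≤ ENNReal.ofReal (Acst d * 2^t * M^((d:ℝ)-s-t))
          + ENNReal.ofReal (Acst d * 2^s * M^((d:ℝ)-s-t))
          + (ENNReal.ofReal (Acst d * 2^(s+t-(d:ℝ)+1) * M^((d:ℝ)-s-t))
            + ENNReal.ofReal (Acst d * 2^(s+t-(d:ℝ)+1) * M^((d:ℝ)-s-t))) :=
          add_le_add (add_le_add hg1 hg2) (add_le_add (hg3 a) (hg3 b))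
      _ = ENNReal.ofReal (Ccst d s t * M^((d:ℝ)-s-t)) := by
          rw [← ENNReal.ofReal_add (by positivity) (by positivity),
            ← ENNReal.ofReal_add (by positivity) (by positivity),
            ← ENNReal.ofReal_add (by positivity) (by positivity)]
          congr 1
          unfold Ccst
          ring
      _ = ENNReal.ofReal (Ccst d s t) * P (a-b) (s+t-(d:ℝ)) := by
          rw [hP, ← ENNReal.ofReal_mul (le_of_lt (Ccst_pos hd s t))]

lemma latPow_eq_J (z : Fin d → ℤ) : latPow z ((2:ℝ) - d) = J z ((d:ℝ) - 2) := by
  unfold latPow J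
  congr 1
  rw [show -((d:ℝ)-2) = (2:ℝ)-d by ring]

lemma J_sub_comm (p q : Fin d → ℤ) (s : ℝ) : J (p - q) s = J (q - p) s := by
  rw [show q - p = -(p - q) by abel]
  unfold J
  rw [norm_neg]
  by_cases h : p - q = 0
  · rw [if_pos h, if_pos (by rw [h]; simp)]
  · rw [if_neg h, if_neg (fun hh => h (neg_eq_zero.1 hh))]

lemma P_neg (z : Fin d → ℤ) (r : ℝ) : P (-z) r = P z r := by
  unfold P
  rw [norm_neg]
  by_cases h : z = 0
  · rw [if_pos h, if_pos (by rw [h]; simp)]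
  · rw [if_neg (fun hh => h (neg_eq_zero.1 hh)), if_neg h]

end Stmt6Aux

open Stmt6Aux

theorem statement6 (d : ℕ) (hd : 6 < d) :
    ∀ ε : ℝ, 0 < ε → ∃ K : ℝ, 1 ≤ K ∧
      ∀ v : Fin d → ℤ, K ≤ ‖v‖ → ∀ x : Fin d → ℤ, x ≠ 0 →
      ∑' y : Fin d → ℤ, ∑' u : Fin d → ℤ, ∑' w : Fin d → ℤ,
        latPow u ((2 : ℝ) - d) * latPow (w - u) ((2 : ℝ) - d) *
          latPow (y - w) ((2 : ℝ) - d) * latPow (y + v - u) ((2 : ℝ) - d) *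
          latPow (u - x) ((2 : ℝ) - d) ≤
        ENNReal.ofReal (ε * ‖x‖ ^ ((4 : ℝ) - d)) := by
  intro ε hε
  have hd1 : 1 ≤ d := by omega
  have hD : (7:ℝ) ≤ (d:ℝ) := by exact_mod_cast (by omega : (7:ℕ) ≤ d)
  set C1 : ℝ := Ccst d ((d:ℝ)-2) ((d:ℝ)-2) with hC1def
  set C2 : ℝ := Ccst d ((d:ℝ)-4) ((d:ℝ)-2) with hC2def
  have hC1 : 0 < C1 := Ccst_pos hd1 _ _
  have hC2 : 0 < C2 := Ccst_pos hd1 _ _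
  set CT : ℝ := C1 * ((C2 + 1) * C1) with hCTdef
  have hCT : 0 < CT := by positivity
  refine ⟨max 1 ((CT/ε)^((1:ℝ)/((d:ℝ)-6))), le_max_left _ _, ?_⟩
  intro v hv x hx
  have hv1 : (1:ℝ) ≤ ‖v‖ := le_trans (le_max_left _ _) hv
  have hvne : v ≠ 0 := by
    intro h; rw [h, norm_zero] at hv1; linarith
  have hx1 : (1:ℝ) ≤ ‖x‖ := one_le_norm hx
  have hs0 : (0:ℝ) < (d:ℝ)-2 := by linarith
  have hs1 : (d:ℝ)-2 ≤ (d:ℝ)-1 := by linarith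
  have hr0 : (0:ℝ) < (d:ℝ)-4 := by linarith
  have hr1 : (d:ℝ)-4 ≤ (d:ℝ)-1 := by linarith
  have hss : (d:ℝ)+1 ≤ ((d:ℝ)-2)+((d:ℝ)-2) := by linarith
  have hrs : (d:ℝ)+1 ≤ ((d:ℝ)-4)+((d:ℝ)-2) := by linarith
  -- convolution in w
  have hw : ∀ u y : Fin d → ℤ, ∑' w : Fin d → ℤ, J (w-u) ((d:ℝ)-2) * J (w-y) ((d:ℝ)-2)
      ≤ ENNReal.ofReal C1 * P (u-y) ((d:ℝ)-4) := by
    intro u y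
    have := conv_sum hd1 _ _ hs0 hs1 hs0 hs1 hss u y
    rwa [show ((d:ℝ)-2)+((d:ℝ)-2)-(d:ℝ) = (d:ℝ)-4 by ring] at this
  -- convolution in u
  have hu : ∑' u : Fin d → ℤ, J u ((d:ℝ)-2) * J (u-x) ((d:ℝ)-2)
      ≤ ENNReal.ofReal C1 * P x ((d:ℝ)-4) := by
    have := conv_sum hd1 _ _ hs0 hs1 hs0 hs1 hss 0 x
    rw [show ((d:ℝ)-2)+((d:ℝ)-2)-(d:ℝ) = (d:ℝ)-4 by ring, zero_sub, P_neg] at this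
    refine le_trans (le_of_eq (tsum_congr fun u => ?_)) this
    rw [sub_zero]
  -- sum in y
  have hy : ∀ u : Fin d → ℤ,
      ∑' y : Fin d → ℤ, J (y+v-u) ((d:ℝ)-2) * P (y-u) ((d:ℝ)-4)
      ≤ ENNReal.ofReal (C2+1) * ENNReal.ofReal (‖v‖^(-((d:ℝ)-6))) := by
    intro u
    have hsplit : ∀ y : Fin d → ℤ, J (y+v-u) ((d:ℝ)-2) * P (y-u) ((d:ℝ)-4)
        = J (y-u) ((d:ℝ)-4) * J (y-(u-v)) ((d:ℝ)-2)
          + (if y = u then J v ((d:ℝ)-2) else 0) := by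
      intro y
      by_cases hyu : y = u
      · subst hyu
        rw [if_pos rfl, show y+v-y = v by abel, show y-(y-v) = v by abel, sub_self]
        rw [show P (0 : Fin d → ℤ) ((d:ℝ)-4) = 1 from if_pos rfl,
          show J (0 : Fin d → ℤ) ((d:ℝ)-4) = 0 from if_pos rfl]
        rw [mul_one, zero_mul, zero_add]
      · rw [if_neg hyu, add_zero, show y+v-u = y-(u-v) by abel]
        have e2 : P (y-u) ((d:ℝ)-4) = J (y-u) ((d:ℝ)-4) := by
          unfold P J
          rw [if_neg (sub_ne_zero.2 hyu), if_neg (sub_ne_zero.2 hyu)]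
        rw [e2, mul_comm]
    calc ∑' y : Fin d → ℤ, J (y+v-u) ((d:ℝ)-2) * P (y-u) ((d:ℝ)-4)
        = ∑' y : Fin d → ℤ, (J (y-u) ((d:ℝ)-4) * J (y-(u-v)) ((d:ℝ)-2))
          + ∑' y : Fin d → ℤ, (if y = u then J v ((d:ℝ)-2) else 0) := by
          rw [tsum_congr hsplit, ENNReal.tsum_add]
      _ ≤ ENNReal.ofReal C2 * P v ((d:ℝ)-6) + J v ((d:ℝ)-2) := by
          apply add_le_add
          · have := conv_sum hd1 _ _ hr0 hr1 hs0 hs1 hrs u (u-v)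
            rwa [show ((d:ℝ)-4)+((d:ℝ)-2)-(d:ℝ) = (d:ℝ)-6 by ring,
              show u-(u-v) = v by abel] at this
          · rw [tsum_eq_single u (fun y hy => if_neg hy), if_pos rfl]
      _ ≤ ENNReal.ofReal C2 * ENNReal.ofReal (‖v‖^(-((d:ℝ)-6)))
          + ENNReal.ofReal (‖v‖^(-((d:ℝ)-6))) := by
          apply add_le_add
          · rw [show P v ((d:ℝ)-6) = ENNReal.ofReal (‖v‖^(-((d:ℝ)-6))) from if_neg hvne]
          · rw [show J v ((d:ℝ)-2) = ENNReal.ofReal (‖v‖^(-((d:ℝ)-2))) from if_neg hvne]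
            exact ENNReal.ofReal_le_ofReal
              (Real.rpow_le_rpow_of_exponent_le hv1 (by linarith))
      _ = ENNReal.ofReal (C2+1) * ENNReal.ofReal (‖v‖^(-((d:ℝ)-6))) := by
          rw [ENNReal.ofReal_add (le_of_lt hC2) zero_le_one, ENNReal.ofReal_one, add_mul,
            one_mul]
  -- assemble
  have hKv : CT * ‖v‖^(-((d:ℝ)-6)) ≤ ε := by
    have hk : (CT/ε)^((1:ℝ)/((d:ℝ)-6)) ≤ ‖v‖ := le_trans (le_max_right _ _) hv
    have hq0 : (0:ℝ) < (d:ℝ)-6 := by linarith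
    have h1 : CT/ε ≤ ‖v‖^((d:ℝ)-6) := by
      calc CT/ε = ((CT/ε)^((1:ℝ)/((d:ℝ)-6)))^((d:ℝ)-6) := by
            rw [← Real.rpow_mul (by positivity), one_div,
              inv_mul_cancel₀ (ne_of_gt hq0), Real.rpow_one]
        _ ≤ ‖v‖^((d:ℝ)-6) :=
            Real.rpow_le_rpow (Real.rpow_nonneg (by positivity) _) hk (le_of_lt hq0)
    have hpow : (0:ℝ) < ‖v‖^((d:ℝ)-6) := Real.rpow_pos_of_pos (by linarith) _
    have h3 : CT ≤ ε * ‖v‖^((d:ℝ)-6) := by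
      rw [div_le_iff₀ hε] at h1; linarith
    rw [Real.rpow_neg (by linarith : (0:ℝ) ≤ ‖v‖)]
    calc CT * (‖v‖^((d:ℝ)-6))⁻¹ ≤ (ε * ‖v‖^((d:ℝ)-6)) * (‖v‖^((d:ℝ)-6))⁻¹ :=
          mul_le_mul_of_nonneg_right h3 (by positivity)
      _ = ε := by field_simp
  have hconv0 : (∑' y : Fin d → ℤ, ∑' u : Fin d → ℤ, ∑' w : Fin d → ℤ,
        latPow u ((2 : ℝ) - d) * latPow (w - u) ((2 : ℝ) - d) *
          latPow (y - w) ((2 : ℝ) - d) * latPow (y + v - u) ((2 : ℝ) - d) *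
          latPow (u - x) ((2 : ℝ) - d))
      = ∑' y : Fin d → ℤ, ∑' u : Fin d → ℤ, ∑' w : Fin d → ℤ,
        J u ((d:ℝ)-2) * J (w-u) ((d:ℝ)-2) * J (y-w) ((d:ℝ)-2) * J (y+v-u) ((d:ℝ)-2)
          * J (u-x) ((d:ℝ)-2) := by
    refine tsum_congr fun y => tsum_congr fun u => tsum_congr fun w => ?_
    rw [latPow_eq_J, latPow_eq_J, latPow_eq_J, latPow_eq_J, latPow_eq_J]
  rw [hconv0]
  have hPx : P x ((d:ℝ)-4) = ENNReal.ofReal (‖x‖^(-((d:ℝ)-4))) := if_neg hx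
  calc (∑' y : Fin d → ℤ, ∑' u : Fin d → ℤ, ∑' w : Fin d → ℤ,
        J u ((d:ℝ)-2) * J (w-u) ((d:ℝ)-2) * J (y-w) ((d:ℝ)-2) * J (y+v-u) ((d:ℝ)-2)
          * J (u-x) ((d:ℝ)-2))
      = ∑' u : Fin d → ℤ, ∑' y : Fin d → ℤ, ∑' w : Fin d → ℤ,
        J u ((d:ℝ)-2) * J (w-u) ((d:ℝ)-2) * J (y-w) ((d:ℝ)-2) * J (y+v-u) ((d:ℝ)-2)
          * J (u-x) ((d:ℝ)-2) := ENNReal.tsum_comm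
    _ ≤ ∑' u : Fin d → ℤ, (J u ((d:ℝ)-2) * J (u-x) ((d:ℝ)-2)) *
        (ENNReal.ofReal C1 * (ENNReal.ofReal (C2+1)
          * ENNReal.ofReal (‖v‖^(-((d:ℝ)-6))))) := by
        apply ENNReal.tsum_le_tsum
        intro u
        calc (∑' y : Fin d → ℤ, ∑' w : Fin d → ℤ,
              J u ((d:ℝ)-2) * J (w-u) ((d:ℝ)-2) * J (y-w) ((d:ℝ)-2) * J (y+v-u) ((d:ℝ)-2)
                * J (u-x) ((d:ℝ)-2))
            = ∑' y : Fin d → ℤ, ((J u ((d:ℝ)-2) * J (u-x) ((d:ℝ)-2)) * J (y+v-u) ((d:ℝ)-2))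
              * ∑' w : Fin d → ℤ, (J (w-u) ((d:ℝ)-2) * J (w-y) ((d:ℝ)-2)) := by
              refine tsum_congr fun y => ?_
              rw [← ENNReal.tsum_mul_left]
              refine tsum_congr fun w => ?_
              rw [J_sub_comm y w]
              ring
          _ ≤ ∑' y : Fin d → ℤ, ((J u ((d:ℝ)-2) * J (u-x) ((d:ℝ)-2)) * J (y+v-u) ((d:ℝ)-2))
              * (ENNReal.ofReal C1 * P (u-y) ((d:ℝ)-4)) :=
              ENNReal.tsum_le_tsum fun y => mul_le_mul_right (hw u y) _
          _ = ((J u ((d:ℝ)-2) * J (u-x) ((d:ℝ)-2)) * ENNReal.ofReal C1)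
              * ∑' y : Fin d → ℤ, (J (y+v-u) ((d:ℝ)-2) * P (y-u) ((d:ℝ)-4)) := by
              rw [← ENNReal.tsum_mul_left]
              refine tsum_congr fun y => ?_
              rw [show u - y = -(y-u) by abel, P_neg]
              ring
          _ ≤ ((J u ((d:ℝ)-2) * J (u-x) ((d:ℝ)-2)) * ENNReal.ofReal C1)
              * (ENNReal.ofReal (C2+1) * ENNReal.ofReal (‖v‖^(-((d:ℝ)-6)))) :=
              mul_le_mul_right (hy u) _
          _ = (J u ((d:ℝ)-2) * J (u-x) ((d:ℝ)-2)) *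
              (ENNReal.ofReal C1 * (ENNReal.ofReal (C2+1)
                * ENNReal.ofReal (‖v‖^(-((d:ℝ)-6))))) := by ring
    _ = (ENNReal.ofReal C1 * (ENNReal.ofReal (C2+1) * ENNReal.ofReal (‖v‖^(-((d:ℝ)-6)))))
        * ∑' u : Fin d → ℤ, (J u ((d:ℝ)-2) * J (u-x) ((d:ℝ)-2)) := by
        rw [← ENNReal.tsum_mul_left]
        refine tsum_congr fun u => ?_
        ring
    _ ≤ (ENNReal.ofReal C1 * (ENNReal.ofReal (C2+1) * ENNReal.ofReal (‖v‖^(-((d:ℝ)-6)))))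
        * (ENNReal.ofReal C1 * P x ((d:ℝ)-4)) := mul_le_mul_right hu _
    _ ≤ ENNReal.ofReal (ε * ‖x‖ ^ ((4 : ℝ) - d)) := by
        rw [hPx,
          ← ENNReal.ofReal_mul (by linarith : (0:ℝ) ≤ C2+1),
          ← ENNReal.ofReal_mul (le_of_lt hC1),
          ← ENNReal.ofReal_mul (le_of_lt hC1),
          ← ENNReal.ofReal_mul (by positivity : (0:ℝ) ≤ C1 * ((C2+1) * ‖v‖^(-((d:ℝ)-6))))]
        apply ENNReal.ofReal_le_ofReal
        have hxe : ‖x‖^(-((d:ℝ)-4)) = ‖x‖^((4:ℝ)-(d:ℝ)) := by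
          rw [show -((d:ℝ)-4) = (4:ℝ)-(d:ℝ) by ring]
        have hxnn : (0:ℝ) ≤ ‖x‖^((4:ℝ)-(d:ℝ)) := Real.rpow_nonneg (by linarith) _
        calc C1 * ((C2+1) * ‖v‖^(-((d:ℝ)-6))) * (C1 * ‖x‖^(-((d:ℝ)-4)))
            = (CT * ‖v‖^(-((d:ℝ)-6))) * ‖x‖^((4:ℝ)-(d:ℝ)) := by
              rw [hxe, hCTdef]; ring
          _ ≤ ε * ‖x‖^((4:ℝ)-(d:ℝ)) := mul_le_mul_of_nonneg_right hKv hxnn
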